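/- Let W be a graphon with K-bounded tails, i.e., for every ε > 0, ∫ |W| · 1{|W| ≥ K(ε)} ≤ ε. Then for any two fractional q-partitions ρ, ρ' of [0,1] and any ε > 0, ∑_{i,j} |β_{ij}(W/ρ) - β_{ij}(W/ρ')| ≤ 2 K(ε/8) d₁(ρ,ρ') + ε/2, where d₁(ρ,ρ') = ∑_i ∫|ρ_i - ρ'_i|. -/
import Mathlib


open MeasureTheory

/-- A fractional `q`-partition of `[0,1]`. -/
def IsFracPartition (q : ℕ) (ρ : Fin q → ℝ → ℝ) : Prop :=
  (∀ i, Measurable (ρ i)) ∧ (∀ i x, ρ i x ∈ Set.Icc (0:ℝ) 1) ∧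
    (∀ x, ∑ i, ρ i x = 1)

/-- `β_{ij}(W/ρ)`. -/
noncomputable def qbeta (q : ℕ) (W : ℝ × ℝ → ℝ) (ρ : Fin q → ℝ → ℝ) :
    Fin q → Fin q → ℝ :=
  fun i j => ∫ z in Set.Icc (0:ℝ) 1 ×ˢ Set.Icc (0:ℝ) 1, ρ i z.1 * ρ j z.2 * W z

/-- `L¹` distance between fractional partitions. -/
noncomputable def d1FP (q : ℕ) (ρ ρ' : Fin q → ℝ → ℝ) : ℝ :=
  ∑ i, ∫ x in Set.Icc (0:ℝ) 1, |ρ i x - ρ' i x|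

/-- For a graphon with `K`-bounded tails,
`∑_{i,j} |β_{ij}(W/ρ) - β_{ij}(W/ρ')| ≤ 2 K(ε/8) d₁(ρ,ρ') + ε/2`. -/
theorem stmt11 (q : ℕ) (W : ℝ × ℝ → ℝ) (K : ℝ → ℝ)
    (hW : IntegrableOn W (Set.Icc (0:ℝ) 1 ×ˢ Set.Icc (0:ℝ) 1))
    (hWs : ∀ x y : ℝ, W (x, y) = W (y, x))
    (hKpos : ∀ ε > 0, 0 < K ε)
    (htail : ∀ ε > 0,
      (∫ z in Set.Icc (0:ℝ) 1 ×ˢ Set.Icc (0:ℝ) 1,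
        Set.indicator {z : ℝ × ℝ | K ε ≤ |W z|} (fun z => |W z|) z) ≤ ε)
    (ρ ρ' : Fin q → ℝ → ℝ)
    (hρ : IsFracPartition q ρ) (hρ' : IsFracPartition q ρ') :
    ∀ ε > 0,
      (∑ i, ∑ j, |qbeta q W ρ i j - qbeta q W ρ' i j|) ≤
        2 * K (ε/8) * d1FP q ρ ρ' + ε/2 := by
  obtain ⟨hρm, hρ01, hρsum⟩ := hρ
  obtain ⟨hρ'm, hρ'01, hρ'sum⟩ := hρ'
  intro ε hε
  have hε8 : (0:ℝ) < ε/8 := by linarith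
  set Kc := K (ε/8) with hKcdef
  have hKc : 0 < Kc := hKpos _ hε8
  set S := Set.Icc (0:ℝ) 1 ×ˢ Set.Icc (0:ℝ) 1 with hSdef
  set μ := (volume : Measure (ℝ × ℝ)).restrict S with hμdef
  set ν := (volume : Measure ℝ).restrict (Set.Icc (0:ℝ) 1) with hνdef
  have hμν : μ = ν.prod ν := by
    rw [hμdef, hνdef, Measure.prod_restrict]
    rfl
  haveI : IsFiniteMeasure μ := by
    constructor
    rw [Measure.restrict_apply_univ]
    exact (isCompact_Icc.prod isCompact_Icc).measure_lt_top
  have hWμ : Integrable W μ := hW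
  have hWm : AEStronglyMeasurable W μ := hWμ.aestronglyMeasurable
  have hWabs : Integrable (fun z => |W z|) μ := hWμ.abs
  have htl : (∫ z, Set.indicator {z : ℝ × ℝ | Kc ≤ |W z|} (fun z => |W z|) z ∂μ) ≤ ε/8 :=
    htail (ε/8) hε8
  set ind : ℝ × ℝ → ℝ := Set.indicator {z : ℝ × ℝ | Kc ≤ |W z|} (fun z => |W z|) with hinddef
  have hind_nonneg : ∀ z, 0 ≤ ind z := fun z =>
    Set.indicator_nonneg (fun z _ => abs_nonneg _) z
  have hind_le : ∀ z, ind z ≤ |W z| :=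
    fun z => Set.indicator_le_self' (fun z _ => abs_nonneg _) z
  have hind_m : AEStronglyMeasurable ind μ := by
    obtain ⟨g, hg, hWg⟩ := hWm
    refine ⟨Set.indicator {z : ℝ × ℝ | Kc ≤ |g z|} (fun z => |g z|), ?_, ?_⟩
    · exact ((hg.measurable.abs).indicator
        (measurableSet_le measurable_const hg.measurable.abs)).stronglyMeasurable
    · filter_upwards [hWg] with z hz
      simp only [hinddef, Set.indicator_apply, Set.mem_setOf_eq, hz]
  have hind_int : Integrable ind μ := by
    refine hWabs.mono hind_m ?_
    filter_upwards with z
    rw [Real.norm_eq_abs, Real.norm_eq_abs, abs_of_nonneg (hind_nonneg z),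
      abs_abs]
    exact hind_le z
  -- the L¹ distance integrand
  set f : ℝ → ℝ := fun x => ∑ i, |ρ i x - ρ' i x| with hfdef
  have hf_m : Measurable f := by
    apply Finset.measurable_sum
    intro i _
    exact ((hρm i).sub (hρ'm i)).abs
  have hf_nonneg : ∀ x, 0 ≤ f x := fun x => Finset.sum_nonneg fun i _ => abs_nonneg _
  have hf_le2 : ∀ x, f x ≤ 2 := by
    intro x
    have h1 : f x ≤ ∑ i, (ρ i x + ρ' i x) := by
      refine Finset.sum_le_sum fun i _ => ?_
      refine abs_sub_le_iff.mpr ⟨?_, ?_⟩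
      · linarith [(hρ01 i x).1, (hρ'01 i x).1]
      · linarith [(hρ01 i x).1, (hρ'01 i x).1]
    rw [Finset.sum_add_distrib, hρsum, hρ'sum] at h1
    linarith
  -- pointwise key bounds on the double sum
  have key1 : ∀ z : ℝ × ℝ,
      (∑ i, ∑ j, |ρ i z.1 * ρ j z.2 - ρ' i z.1 * ρ' j z.2|) ≤ f z.1 + f z.2 := by
    intro z
    have h1 : ∀ i j : Fin q, |ρ i z.1 * ρ j z.2 - ρ' i z.1 * ρ' j z.2|
        ≤ ρ i z.1 * |ρ j z.2 - ρ' j z.2| + |ρ i z.1 - ρ' i z.1| * ρ' j z.2 := by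
      intro i j
      have he : ρ i z.1 * ρ j z.2 - ρ' i z.1 * ρ' j z.2
          = ρ i z.1 * (ρ j z.2 - ρ' j z.2) + (ρ i z.1 - ρ' i z.1) * ρ' j z.2 := by ring
      rw [he]
      refine (abs_add_le _ _).trans ?_
      rw [abs_mul, abs_mul, abs_of_nonneg (hρ01 i z.1).1, abs_of_nonneg (hρ'01 j z.2).1]
    calc (∑ i, ∑ j, |ρ i z.1 * ρ j z.2 - ρ' i z.1 * ρ' j z.2|)
        ≤ ∑ i, ∑ j, (ρ i z.1 * |ρ j z.2 - ρ' j z.2| + |ρ i z.1 - ρ' i z.1| * ρ' j z.2) :=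
          Finset.sum_le_sum fun i _ => Finset.sum_le_sum fun j _ => h1 i j
      _ = (∑ i, ρ i z.1) * f z.2 + f z.1 * (∑ j, ρ' j z.2) := by
          simp only [Finset.sum_add_distrib, ← Finset.mul_sum, ← Finset.sum_mul, hfdef]
      _ = f z.1 + f z.2 := by rw [hρsum, hρ'sum]; ring
  have key2 : ∀ z : ℝ × ℝ,
      (∑ i, ∑ j, |ρ i z.1 * ρ j z.2 - ρ' i z.1 * ρ' j z.2|) ≤ 2 := by
    intro z
    have h1 : ∀ i j : Fin q, |ρ i z.1 * ρ j z.2 - ρ' i z.1 * ρ' j z.2|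
        ≤ ρ i z.1 * ρ j z.2 + ρ' i z.1 * ρ' j z.2 := by
      intro i j
      refine abs_sub_le_iff.mpr ⟨?_, ?_⟩
      · nlinarith [(hρ01 i z.1).1, (hρ01 j z.2).1, (hρ'01 i z.1).1, (hρ'01 j z.2).1]
      · nlinarith [(hρ01 i z.1).1, (hρ01 j z.2).1, (hρ'01 i z.1).1, (hρ'01 j z.2).1]
    calc (∑ i, ∑ j, |ρ i z.1 * ρ j z.2 - ρ' i z.1 * ρ' j z.2|)
        ≤ ∑ i, ∑ j, (ρ i z.1 * ρ j z.2 + ρ' i z.1 * ρ' j z.2) :=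
          Finset.sum_le_sum fun i _ => Finset.sum_le_sum fun j _ => h1 i j
      _ = (∑ i, ρ i z.1) * (∑ j, ρ j z.2) + (∑ i, ρ' i z.1) * (∑ j, ρ' j z.2) := by
          simp only [Finset.sum_add_distrib, ← Finset.mul_sum, ← Finset.sum_mul]
      _ = 2 := by rw [hρsum, hρsum, hρ'sum, hρ'sum]; norm_num
  have key_nonneg : ∀ z : ℝ × ℝ,
      0 ≤ ∑ i, ∑ j, |ρ i z.1 * ρ j z.2 - ρ' i z.1 * ρ' j z.2| :=
    fun z => Finset.sum_nonneg fun i _ => Finset.sum_nonneg fun j _ => abs_nonneg _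
  -- integrability facts
  have hprod_m : ∀ (σ : Fin q → ℝ → ℝ), (∀ i, Measurable (σ i)) →
      ∀ i j : Fin q, Measurable (fun z : ℝ × ℝ => σ i z.1 * σ j z.2) := by
    intro σ hσ i j
    exact ((hσ i).comp measurable_fst).mul ((hσ j).comp measurable_snd)
  have habs01 : ∀ (σ : Fin q → ℝ → ℝ), (∀ i x, σ i x ∈ Set.Icc (0:ℝ) 1) →
      ∀ (i : Fin q) (x : ℝ), |σ i x| ≤ 1 := by
    intro σ hσ i x
    exact abs_le.mpr ⟨by linarith [(hσ i x).1], (hσ i x).2⟩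
  have h_int : ∀ (σ : Fin q → ℝ → ℝ), (∀ i, Measurable (σ i)) →
      (∀ i x, σ i x ∈ Set.Icc (0:ℝ) 1) →
      ∀ i j : Fin q, Integrable (fun z : ℝ × ℝ => σ i z.1 * σ j z.2 * W z) μ := by
    intro σ hσm hσ01 i j
    refine hWμ.mono (((hprod_m σ hσm i j).aestronglyMeasurable).mul hWm) ?_
    filter_upwards with z
    rw [Real.norm_eq_abs, Real.norm_eq_abs, abs_mul, abs_mul]
    have h1 := habs01 σ hσ01 i z.1
    have h2 := habs01 σ hσ01 j z.2
    have h3 : |σ i z.1| * |σ j z.2| ≤ 1 := by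
      nlinarith [abs_nonneg (σ i z.1), abs_nonneg (σ j z.2)]
    calc |σ i z.1| * |σ j z.2| * |W z| ≤ 1 * |W z| :=
          mul_le_mul_of_nonneg_right h3 (abs_nonneg _)
      _ = |W z| := one_mul _
  have hΔ_int : ∀ i j : Fin q,
      Integrable (fun z : ℝ × ℝ => |ρ i z.1 * ρ j z.2 - ρ' i z.1 * ρ' j z.2| * |W z|) μ := by
    intro i j
    refine hWμ.mono ?_ ?_
    · exact (((hprod_m ρ hρm i j).sub (hprod_m ρ' hρ'm i j)).abs.aestronglyMeasurable).mul
        hWabs.aestronglyMeasurable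
    · filter_upwards with z
      rw [Real.norm_eq_abs, Real.norm_eq_abs, abs_mul, abs_abs, abs_abs]
      have h1 : |ρ i z.1 * ρ j z.2 - ρ' i z.1 * ρ' j z.2| ≤ 1 := by
        refine abs_sub_le_iff.mpr ⟨?_, ?_⟩
        · nlinarith [(hρ01 i z.1).1, (hρ01 j z.2).1, (hρ01 i z.1).2, (hρ01 j z.2).2,
            (hρ'01 i z.1).1, (hρ'01 j z.2).1]
        · nlinarith [(hρ'01 i z.1).1, (hρ'01 j z.2).1, (hρ'01 i z.1).2, (hρ'01 j z.2).2,
            (hρ01 i z.1).1, (hρ01 j z.2).1]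
      nlinarith [abs_nonneg (W z), abs_nonneg (ρ i z.1 * ρ j z.2 - ρ' i z.1 * ρ' j z.2)]
  -- per-term bound
  have step1 : ∀ i j : Fin q, |qbeta q W ρ i j - qbeta q W ρ' i j|
      ≤ ∫ z, |ρ i z.1 * ρ j z.2 - ρ' i z.1 * ρ' j z.2| * |W z| ∂μ := by
    intro i j
    have hsub : qbeta q W ρ i j - qbeta q W ρ' i j
        = ∫ z, (ρ i z.1 * ρ j z.2 * W z - ρ' i z.1 * ρ' j z.2 * W z) ∂μ := by
      rw [integral_sub (h_int ρ hρm hρ01 i j) (h_int ρ' hρ'm hρ'01 i j)]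
      rfl
    rw [hsub, ← Real.norm_eq_abs]
    refine (norm_integral_le_integral_norm _).trans (le_of_eq ?_)
    congr 1
    funext z
    rw [Real.norm_eq_abs, ← abs_mul]
    congr 1
    ring
  -- sum the bound and interchange sum and integral
  have step2 : (∑ i, ∑ j, |qbeta q W ρ i j - qbeta q W ρ' i j|)
      ≤ ∫ z, (∑ i, ∑ j, |ρ i z.1 * ρ j z.2 - ρ' i z.1 * ρ' j z.2|) * |W z| ∂μ := by
    have e1 : (∫ z, (∑ i, ∑ j, |ρ i z.1 * ρ j z.2 - ρ' i z.1 * ρ' j z.2|) * |W z| ∂μ)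
        = ∑ i, ∑ j, ∫ z, |ρ i z.1 * ρ j z.2 - ρ' i z.1 * ρ' j z.2| * |W z| ∂μ := by
      have : (fun z : ℝ × ℝ => (∑ i, ∑ j, |ρ i z.1 * ρ j z.2 - ρ' i z.1 * ρ' j z.2|) * |W z|)
          = fun z => ∑ i, ∑ j, |ρ i z.1 * ρ j z.2 - ρ' i z.1 * ρ' j z.2| * |W z| := by
        funext z
        rw [Finset.sum_mul]
        congr 1
        funext i
        rw [Finset.sum_mul]
      rw [this, integral_finset_sum]
      · congr 1
        funext i
        rw [integral_finset_sum]
        intro j _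
        exact hΔ_int i j
      · intro i _
        exact integrable_finset_sum _ fun j _ => hΔ_int i j
    rw [e1]
    exact Finset.sum_le_sum fun i _ => Finset.sum_le_sum fun j _ => step1 i j
  -- the dominating function
  set H : ℝ × ℝ → ℝ := fun z => (f z.1 * Kc + f z.2 * Kc) + 2 * ind z with hHdef
  have hfν_int : ∀ i : Fin q, Integrable (fun x => |ρ i x - ρ' i x|) ν := by
    intro i
    haveI : IsFiniteMeasure ν := by
      constructor
      rw [Measure.restrict_apply_univ]
      exact isCompact_Icc.measure_lt_top
    refine (integrable_const (2:ℝ)).mono' (((hρm i).sub (hρ'm i)).abs.aestronglyMeasurable) ?_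
    filter_upwards with x
    rw [Real.norm_eq_abs, abs_abs]
    refine abs_sub_le_iff.mpr ⟨?_, ?_⟩
    · linarith [(hρ01 i x).1, (hρ01 i x).2, (hρ'01 i x).1, (hρ'01 i x).2]
    · linarith [(hρ01 i x).1, (hρ01 i x).2, (hρ'01 i x).1, (hρ'01 i x).2]
  have hf_int : Integrable f ν := integrable_finset_sum _ fun i _ => hfν_int i
  have hf1_int : Integrable (fun z : ℝ × ℝ => f z.1 * Kc) μ := by
    refine (integrable_const (2 * Kc)).mono'
      (((hf_m.comp measurable_fst).mul measurable_const).aestronglyMeasurable) ?_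
    filter_upwards with z
    rw [Real.norm_eq_abs, abs_mul, abs_of_nonneg (hf_nonneg z.1), abs_of_pos hKc]
    nlinarith [hf_le2 z.1, hf_nonneg z.1]
  have hf2_int : Integrable (fun z : ℝ × ℝ => f z.2 * Kc) μ := by
    refine (integrable_const (2 * Kc)).mono'
      (((hf_m.comp measurable_snd).mul measurable_const).aestronglyMeasurable) ?_
    filter_upwards with z
    rw [Real.norm_eq_abs, abs_mul, abs_of_nonneg (hf_nonneg z.2), abs_of_pos hKc]
    nlinarith [hf_le2 z.2, hf_nonneg z.2]
  have hH_int : Integrable H μ := (hf1_int.add hf2_int).add (hind_int.const_mul 2)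
  -- pointwise domination
  have step3 : ∀ z : ℝ × ℝ,
      (∑ i, ∑ j, |ρ i z.1 * ρ j z.2 - ρ' i z.1 * ρ' j z.2|) * |W z| ≤ H z := by
    intro z
    set T := ∑ i, ∑ j, |ρ i z.1 * ρ j z.2 - ρ' i z.1 * ρ' j z.2| with hT
    have hT0 : 0 ≤ T := key_nonneg z
    have hT2 : T ≤ 2 := key2 z
    have hTf : T ≤ f z.1 + f z.2 := key1 z
    have hsplit : |W z| ≤ min (|W z|) Kc + ind z := by
      by_cases h : Kc ≤ |W z|
      · have h1 : ind z = |W z| := by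
          simp only [hinddef, Set.indicator_apply, Set.mem_setOf_eq, if_pos h]
        rw [h1, min_eq_right h]
        linarith
      · have h1 : ind z = 0 := by
          simp only [hinddef, Set.indicator_apply, Set.mem_setOf_eq, if_neg h]
        rw [h1, min_eq_left (le_of_lt (not_le.mp h))]
        linarith
    have hmin : min (|W z|) Kc ≤ Kc := min_le_right _ _
    have hmin0 : 0 ≤ min (|W z|) Kc := le_min (abs_nonneg _) hKc.le
    calc T * |W z| ≤ T * (min (|W z|) Kc + ind z) := by
          exact mul_le_mul_of_nonneg_left hsplit hT0
      _ = T * min (|W z|) Kc + T * ind z := by ring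
      _ ≤ (f z.1 + f z.2) * Kc + 2 * ind z := by
          refine add_le_add ?_ ?_
          · exact mul_le_mul hTf hmin hmin0 (by linarith [hf_nonneg z.1, hf_nonneg z.2])
          · exact mul_le_mul_of_nonneg_right hT2 (hind_nonneg z)
      _ = H z := by rw [hHdef]; ring
  -- integrate the domination
  have step4 : (∫ z, (∑ i, ∑ j, |ρ i z.1 * ρ j z.2 - ρ' i z.1 * ρ' j z.2|) * |W z| ∂μ)
      ≤ ∫ z, H z ∂μ := by
    refine integral_mono_of_nonneg ?_ hH_int ?_
    · filter_upwards with z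
      exact mul_nonneg (key_nonneg z) (abs_nonneg _)
    · filter_upwards with z
      exact step3 z
  -- compute the integral of H
  have hν1 : (∫ x, (1:ℝ) ∂ν) = 1 := by
    simp [hνdef, Real.volume_Icc]
  have hfν : (∫ x, f x ∂ν) = d1FP q ρ ρ' := by
    rw [hfdef, integral_finset_sum _ fun i _ => hfν_int i]
    rfl
  have hint1 : (∫ z, f z.1 * Kc ∂μ) = d1FP q ρ ρ' * Kc := by
    rw [integral_mul_const]
    congr 1
    rw [hμν]
    have : (∫ z : ℝ × ℝ, f z.1 ∂ν.prod ν) = (∫ x, f x ∂ν) * ∫ y, (1:ℝ) ∂ν := by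
      rw [← integral_prod_mul f (fun _ => (1:ℝ))]
      simp
    rw [this, hν1, hfν, mul_one]
  have hint2 : (∫ z, f z.2 * Kc ∂μ) = d1FP q ρ ρ' * Kc := by
    rw [integral_mul_const]
    congr 1
    rw [hμν]
    have : (∫ z : ℝ × ℝ, f z.2 ∂ν.prod ν) = (∫ x, (1:ℝ) ∂ν) * ∫ y, f y ∂ν := by
      rw [← integral_prod_mul (fun _ => (1:ℝ)) f]
      simp
    rw [this, hν1, hfν, one_mul]
  have hintH : (∫ z, H z ∂μ) ≤ 2 * Kc * d1FP q ρ ρ' + ε/4 := by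
    rw [hHdef]
    have e1 : (∫ z, ((f z.1 * Kc + f z.2 * Kc) + 2 * ind z) ∂μ)
        = (∫ z, (f z.1 * Kc + f z.2 * Kc) ∂μ) + ∫ z, 2 * ind z ∂μ :=
      integral_add (hf1_int.add hf2_int) (hind_int.const_mul 2)
    have e2 : (∫ z, (f z.1 * Kc + f z.2 * Kc) ∂μ)
        = (∫ z, f z.1 * Kc ∂μ) + ∫ z, f z.2 * Kc ∂μ :=
      integral_add hf1_int hf2_int
    rw [e1, e2, integral_const_mul, hint1, hint2]
    have : (∫ z, ind z ∂μ) ≤ ε/8 := htl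
    linarith
  have := (step2.trans step4).trans hintH
  linarith
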